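/- C-swap: if (S_i, T_i), i = 1,…,b, is a 2-part 2-design with parameters (v1,v2,b,k1,k2,λ11,λ22,λ12) and v1 - k1 ≥ 2, then the blocks (C \ S_i, T_i), where C is the full set of cancer types, form a 2-part 2-design with parameters k1' = v1 - k1, λ11' = b - 2r1 + λ11, λ12' = r2 - λ12, and unchanged b, v1, v2, k2, λ22, where r1 = b*k1/v1 and r2 = b*k2/v2. -/
import Mathlib


open Finset

lemma split_filter {b : ℕ} (p q : Fin b → Prop) [DecidablePred p] [DecidablePred q] :
    (Finset.univ.filter (fun i => p i ∧ q i)).card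
      + (Finset.univ.filter (fun i => p i ∧ ¬ q i)).card
      = (Finset.univ.filter p).card := by
  rw [← Finset.filter_filter, ← Finset.filter_filter]
  exact Finset.card_filter_add_card_filter_not (fun i => q i)

/-- C-swap: replacing the cancer-type set of every block of a 2-part 2-design
by its complement (assuming v1 - k1 ≥ 2) gives a 2-part 2-design with
k1' = v1 - k1, λ11' = b - 2r1 + λ11 (which is positive), λ12' = r2 - λ12,
and b, v1, v2, k2, λ22 unchanged. -/
theorem c_swap_two_part
    (v1 v2 b k1 k2 l11 l22 l12 r1 r2 : ℕ)
    (S : Fin b → Finset (Fin v1)) (T : Fin b → Finset (Fin v2))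
    (hS : ∀ i, (S i).card = k1) (hT : ∀ i, (T i).card = k2)
    (hk1 : 1 < k1) (hk1v : k1 < v1) (hk2 : 1 < k2) (hk2v : k2 < v2)
    (hl11 : 0 < l11) (hl22 : 0 < l22)
    (h11 : ∀ x y : Fin v1, x ≠ y →
      (Finset.univ.filter (fun i => x ∈ S i ∧ y ∈ S i)).card = l11)
    (h22 : ∀ x y : Fin v2, x ≠ y →
      (Finset.univ.filter (fun i => x ∈ T i ∧ y ∈ T i)).card = l22)
    (h12 : ∀ (x : Fin v1) (y : Fin v2),
      (Finset.univ.filter (fun i => x ∈ S i ∧ y ∈ T i)).card = l12)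
    (hr1 : ∀ x : Fin v1, (Finset.univ.filter (fun i => x ∈ S i)).card = r1)
    (hr2 : ∀ y : Fin v2, (Finset.univ.filter (fun i => y ∈ T i)).card = r2)
    (hswap : 2 ≤ v1 - k1) :
    -- new cancer blocks have size v1 - k1
    (∀ i, ((S i)ᶜ).card = v1 - k1) ∧
    -- λ11' = b - 2 r1 + λ11, stated additively, and λ11' > 0
    (∀ x y : Fin v1, x ≠ y →
      (Finset.univ.filter (fun i => x ∉ S i ∧ y ∉ S i)).card + 2 * r1 = b + l11) ∧
    (b + l11 > 2 * r1) ∧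
    -- λ12' = r2 - λ12, stated additively
    (∀ (x : Fin v1) (y : Fin v2),
      (Finset.univ.filter (fun i => x ∉ S i ∧ y ∈ T i)).card + l12 = r2) ∧
    -- λ22 unchanged
    (∀ x y : Fin v2, x ≠ y →
      (Finset.univ.filter (fun i => x ∈ T i ∧ y ∈ T i)).card = l22) := by
  have hcompl : ∀ i, ((S i)ᶜ).card = v1 - k1 := by
    intro i
    rw [Finset.card_compl, hS i, Fintype.card_fin]
  have key11 : ∀ x y : Fin v1, x ≠ y →
      (Finset.univ.filter (fun i => x ∉ S i ∧ y ∉ S i)).card + 2 * r1 = b + l11 := by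
    intro x y hxy
    have e1 := split_filter (fun i => x ∈ S i) (fun i => y ∈ S i)
    have e2 := split_filter (fun i => y ∈ S i) (fun i => x ∈ S i)
    have e3 := split_filter (fun i => x ∉ S i) (fun i => y ∈ S i)
    have e4 : (Finset.univ.filter (fun i => x ∈ S i)).card
        + (Finset.univ.filter (fun i => x ∉ S i)).card = b := by
      have := Finset.card_filter_add_card_filter_not
        (s := (Finset.univ : Finset (Fin b))) (fun i => x ∈ S i)
      simpa using this
    have hc1 : (Finset.univ.filter (fun i => y ∈ S i ∧ x ∈ S i)).card = l11 :=
      h11 y x hxy.symm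
    have hc2 : (Finset.univ.filter (fun i => y ∈ S i ∧ x ∉ S i)).card
        = (Finset.univ.filter (fun i => x ∉ S i ∧ y ∈ S i)).card := by
      congr 1
      apply Finset.filter_congr
      intro i _
      simp [and_comm]
    rw [h11 x y hxy] at e1
    rw [hc1, hc2] at e2
    rw [hr1 x] at e1 e4
    rw [hr1 y] at e2
    omega
  refine ⟨hcompl, key11, ?_, ?_, h22⟩
  · -- positivity
    have hv1 : 1 < v1 := lt_trans hk1 hk1v
    have hb : 0 < b := by
      by_contra hb
      push_neg at hb
      interval_cases b
      have := h11 ⟨0, by omega⟩ ⟨1, hv1⟩ (by simp)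
      simp at this
      omega
    set i : Fin b := ⟨0, hb⟩
    have hcard : 1 < ((S i)ᶜ).card := by rw [hcompl i]; omega
    obtain ⟨x, hx, y, hy, hxy⟩ := Finset.one_lt_card.mp hcard
    rw [Finset.mem_compl] at hx hy
    have hpos : 0 < (Finset.univ.filter (fun j => x ∉ S j ∧ y ∉ S j)).card := by
      apply Finset.card_pos.mpr
      exact ⟨i, by simp [hx, hy]⟩
    have := key11 x y hxy
    omega
  · intro x y
    have e1 := split_filter (fun i => y ∈ T i) (fun i => x ∈ S i)
    have hc1 : (Finset.univ.filter (fun i => y ∈ T i ∧ x ∈ S i)).card = l12 := by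
      rw [← h12 x y]
      congr 1
      apply Finset.filter_congr
      intro i _
      simp [and_comm]
    have hc2 : (Finset.univ.filter (fun i => y ∈ T i ∧ x ∉ S i)).card
        = (Finset.univ.filter (fun i => x ∉ S i ∧ y ∈ T i)).card := by
      congr 1
      apply Finset.filter_congr
      intro i _
      simp [and_comm]
    rw [hc1, hc2, hr2 y] at e1
    omega
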